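/- Let Λ be a rank-n lattice in ℝⁿ invariant under the reflection R in a hyperplane Π through o, and suppose Λ is not a vertical translation lattice with respect to Π. Let {v₁,...,v_{n−1}} be a basis of Λ₀ = Λ ∩ Π and let d be the minimal positive distance of points of Λ \ Π to Π. Then there is a point w of Λ \ Π at distance d from Π of the form w = ½(α₁v₁ + ⋯ + α_{n−1}v_{n−1} + u) with u ∈ Π^⊥ of norm 2d and α₁,...,α_{n−1} ∈ {0,1} not all zero, and the coefficients α_i are uniquely determined. -/

import Mathlib

open Metric


variable {E : Type*} [NormedAddCommGroup E] [InnerProductSpace ℝ E]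

lemma my_infDist_eq (K : Submodule ℝ E) [K.HasOrthogonalProjection] (y : E) :
    infDist y (K : Set E) = ‖y - K.orthogonalProjection y‖ := by
  refine le_antisymm ((infDist_le_dist_of_mem (K.orthogonalProjection y).2).trans_eq
    (dist_eq_norm _ _)) ?_
  by_contra h
  push_neg at h
  obtain ⟨z, hzK, hz⟩ := (infDist_lt_iff ⟨0, K.zero_mem⟩).1 h
  rw [dist_eq_norm] at hz
  have h1 : y - z = (y - K.orthogonalProjection y) + ((K.orthogonalProjection y : E) - z) := by
    abel
  have h2 : (inner ℝ (y - (K.orthogonalProjection y : E)) ((K.orthogonalProjection y : E) - z) : ℝ) = 0 := by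
    have ha := Submodule.sub_starProjection_mem_orthogonal (K := K) y
    have hb : (K.orthogonalProjection y : E) - z ∈ K := K.sub_mem (K.orthogonalProjection y).2 hzK
    rw [real_inner_comm]
    exact ha _ hb
  have h3 : ‖y - z‖ ^ 2 = ‖y - (K.orthogonalProjection y : E)‖ ^ 2
      + ‖(K.orthogonalProjection y : E) - z‖ ^ 2 := by
    rw [h1, norm_add_sq_real, h2]; ring
  nlinarith [norm_nonneg (y - z), norm_nonneg (y - (K.orthogonalProjection y : E)),
    norm_nonneg ((K.orthogonalProjection y : E) - z)]

lemma my_mem_zspan {M : Type*} [AddCommGroup M] {ι : Type*} [Fintype ι] (v : ι → M) (x : M) :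
    x ∈ AddSubgroup.closure (Set.range v) ↔ ∃ c : ι → ℤ, ∑ i, c i • v i = x := by
  rw [← Submodule.span_int_eq_addSubgroupClosure]
  exact Submodule.mem_span_range_iff_exists_fun ℤ

set_option maxHeartbeats 1000000 in
/-- Let `Λ` be a full-rank lattice in `ℝⁿ` invariant under the reflection in a hyperplane
`Π` through the origin, which is not a vertical translation lattice with respect to `Π`.
Let `{v₁, …, v_{n-1}}` be a basis of `Λ₀ = Λ ∩ Π` and `d` the minimal positive distance
of points of `Λ \ Π` to `Π`.  Then there is a point `w` of `Λ \ Π` at distance `d` from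
`Π` of the form `w = ½(α₁v₁ + ⋯ + α_{n-1}v_{n-1} + u)` with `u ∈ Π^⊥` of norm `2d` and
`αᵢ ∈ {0,1}` not all zero, and the coefficients `αᵢ` are uniquely determined. -/
theorem lattice_reflection_nonvertical_form (n : ℕ)
    (L : AddSubgroup (EuclideanSpace ℝ (Fin n)))
    (hL : ∃ b : Fin n → EuclideanSpace ℝ (Fin n),
      LinearIndependent ℝ b ∧ L = AddSubgroup.closure (Set.range b))
    (Pl : Submodule ℝ (EuclideanSpace ℝ (Fin n)))
    (hPl : Module.finrank ℝ Pl = n - 1)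
    (hinv : ∀ x, x ∈ L ↔ Pl.reflection x ∈ L)
    (hnv : ¬ ∃ u ∈ Plᗮ, ∀ x, x ∈ L ↔ ∃ k : ℤ, x - k • u ∈ L ⊓ Pl.toAddSubgroup)
    (v : Fin (n - 1) → EuclideanSpace ℝ (Fin n))
    (hvli : LinearIndependent ℝ v)
    (hvspan : L ⊓ Pl.toAddSubgroup = AddSubgroup.closure (Set.range v))
    (d : ℝ) (hd0 : 0 < d)
    (hd : IsLeast {r : ℝ | ∃ y ∈ L, y ∉ Pl ∧
      infDist y (Pl : Set (EuclideanSpace ℝ (Fin n))) = r} d) :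
    ∃ α : Fin (n - 1) → ℤ,
      ((∀ i, α i = 0 ∨ α i = 1) ∧ (∃ i, α i ≠ 0) ∧
        ∃ u ∈ Plᗮ, ‖u‖ = 2 * d ∧
          (2 : ℝ)⁻¹ • ((∑ i, (α i : ℝ) • v i) + u) ∈ L ∧
          (2 : ℝ)⁻¹ • ((∑ i, (α i : ℝ) • v i) + u) ∉ Pl ∧
          infDist ((2 : ℝ)⁻¹ • ((∑ i, (α i : ℝ) • v i) + u))
            (Pl : Set (EuclideanSpace ℝ (Fin n))) = d) ∧
      ∀ β : Fin (n - 1) → ℤ,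
        ((∀ i, β i = 0 ∨ β i = 1) ∧ (∃ i, β i ≠ 0) ∧
          ∃ u ∈ Plᗮ, ‖u‖ = 2 * d ∧
            (2 : ℝ)⁻¹ • ((∑ i, (β i : ℝ) • v i) + u) ∈ L ∧
            (2 : ℝ)⁻¹ • ((∑ i, (β i : ℝ) • v i) + u) ∉ Pl ∧
            infDist ((2 : ℝ)⁻¹ • ((∑ i, (β i : ℝ) • v i) + u))
              (Pl : Set (EuclideanSpace ℝ (Fin n))) = d) → β = α := by
  classical
  obtain ⟨⟨y, hyL, hyP, hyd⟩, hdlb⟩ := hd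
  -- notation for the orthogonal projection
  set P : EuclideanSpace ℝ (Fin n) → EuclideanSpace ℝ (Fin n) :=
    fun x => (Pl.orthogonalProjection x : EuclideanSpace ℝ (Fin n)) with hP
  -- n ≥ 1
  have hn : 1 ≤ n := by
    rcases Nat.eq_zero_or_pos n with h0 | h; swap; · exact h
    subst h0
    exact absurd (show y = 0 from by ext i; exact i.elim0) (by
      intro h; exact hyP (h ▸ Pl.zero_mem))
  have hfrE : Module.finrank ℝ (EuclideanSpace ℝ (Fin n)) = n := by
    simp [finrank_euclideanSpace]
  have hfr : Module.finrank ℝ (Plᗮ) = 1 := by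
    have h := Submodule.finrank_add_finrank_orthogonal (K := Pl)
    rw [hPl, hfrE] at h
    omega
  -- membership in the sublattice
  have hmemv : ∀ x, x ∈ L ⊓ Pl.toAddSubgroup ↔ ∃ c : Fin (n-1) → ℤ, ∑ i, c i • v i = x := by
    intro x; rw [hvspan]; exact my_mem_zspan v x
  have hviPL : ∀ i, v i ∈ L ∧ v i ∈ Pl := by
    intro i
    have : v i ∈ L ⊓ Pl.toAddSubgroup := by
      rw [hvspan]; exact AddSubgroup.subset_closure (Set.mem_range_self i)
    exact ⟨(AddSubgroup.mem_inf.1 this).1, (AddSubgroup.mem_inf.1 this).2⟩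
  -- decomposition of y
  have hyRL : Pl.reflection y ∈ L := (hinv y).1 hyL
  have hrefl : Pl.reflection y = 2 • P y - y := Pl.reflection_apply y
  have hzmem : y + Pl.reflection y ∈ L ⊓ Pl.toAddSubgroup := by
    refine AddSubgroup.mem_inf.2 ⟨L.add_mem hyL hyRL, ?_⟩
    have : y + Pl.reflection y = P y + P y := by rw [hrefl, two_smul]; abel
    rw [this]
    exact Pl.add_mem (Pl.orthogonalProjection y).2 (Pl.orthogonalProjection y).2
  obtain ⟨m, hm⟩ := (hmemv _).1 hzmem
  set u : EuclideanSpace ℝ (Fin n) := y - Pl.reflection y with hu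
  have huO : u ∈ Plᗮ := by
    have h1 : u = (y - P y) + (y - P y) := by rw [hu, hrefl, two_smul]; abel
    rw [h1]
    exact Plᗮ.add_mem (Submodule.sub_starProjection_mem_orthogonal y)
      (Submodule.sub_starProjection_mem_orthogonal y)
  have hyPnorm : ‖y - P y‖ = d := by rw [← hyd, my_infDist_eq]
  have hunorm : ‖u‖ = 2 * d := by
    have h1 : u = (2:ℝ) • (y - P y) := by rw [hu, hrefl, two_smul]; module
    rw [h1, norm_smul, hyPnorm]
    norm_num
  -- the coefficients
  set α : Fin (n-1) → ℤ := fun i => m i % 2 with hα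
  set k : Fin (n-1) → ℤ := fun i => m i / 2 with hk
  set S : EuclideanSpace ℝ (Fin n) := ∑ i, k i • v i with hS
  have hSmem : S ∈ L ⊓ Pl.toAddSubgroup := (hmemv _).2 ⟨k, rfl⟩
  have hSL : S ∈ L := (AddSubgroup.mem_inf.1 hSmem).1
  have hSP : S ∈ Pl := (AddSubgroup.mem_inf.1 hSmem).2
  set w : EuclideanSpace ℝ (Fin n) := y - S with hw
  have hwL : w ∈ L := L.sub_mem hyL hSL
  have hwP : w ∉ Pl := fun h => hyP (by
    have : y = w + S := by rw [hw]; abel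
    rw [this]; exact Pl.add_mem h hSP)
  -- the key algebraic identity
  have hmR : ∑ i, ((m i : ℝ)) • v i = y + Pl.reflection y := by
    rw [← hm]
    exact Finset.sum_congr rfl fun i _ => Int.cast_smul_eq_zsmul ℝ (m i) (v i)
  have hSR : S = ∑ i, ((k i : ℝ)) • v i := by
    rw [hS]
    exact Finset.sum_congr rfl fun i _ => (Int.cast_smul_eq_zsmul ℝ (k i) (v i)).symm
  have hkey : (∑ i, (α i : ℝ) • v i) + u = (2:ℝ) • w := by
    have hsum : ∑ i, (α i : ℝ) • v i
        = (∑ i, ((m i : ℝ)) • v i) - (2:ℝ) • ∑ i, ((k i : ℝ)) • v i := by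
      rw [Finset.smul_sum, ← Finset.sum_sub_distrib]
      refine Finset.sum_congr rfl fun i _ => ?_
      rw [smul_smul, ← sub_smul]
      congr 1
      have : α i = m i - 2 * k i := by simp only [hα, hk]; omega
      rw [this]; push_cast; ring
    rw [hsum, hmR, hw, hSR, hu]
    module
  have hweq : (2 : ℝ)⁻¹ • ((∑ i, (α i : ℝ) • v i) + u) = w := by
    rw [hkey, smul_smul]; norm_num
  -- distance of w
  have hPapp : ∀ z : EuclideanSpace ℝ (Fin n),
      ((Pl.orthogonalProjection z : EuclideanSpace ℝ (Fin n))) = P z := fun _ => rfl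
  have hwsub : w - P w = y - P y := by
    have hPS : ((Pl.orthogonalProjection S : EuclideanSpace ℝ (Fin n))) = S :=
      Submodule.starProjection_eq_self_iff.2 hSP
    have hPw : P w = P y - S := by
      rw [← hPapp, hw, map_sub, Submodule.coe_sub, hPS, hPapp]
    rw [hPw, hw]; abel
  have hwd : infDist w (Pl : Set (EuclideanSpace ℝ (Fin n))) = d := by
    rw [my_infDist_eq, hPapp, hwsub, hyPnorm]
  -- not all α are zero
  have hαne : ∃ i, α i ≠ 0 := by
    by_contra hall
    push_neg at hall
    have hzero : ∑ i, (α i : ℝ) • v i = 0 := by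
      simp [hall]
    have hwu : w = (2:ℝ)⁻¹ • u := by rw [← hweq, hzero, zero_add]
    have hwO : w ∈ Plᗮ := by rw [hwu]; exact Plᗮ.smul_mem _ huO
    have hwnorm : ‖w‖ = d := by
      rw [hwu, norm_smul, hunorm]
      simp
    have hw0 : w ≠ 0 := by
      intro h; rw [h, norm_zero] at hwnorm; exact absurd hwnorm.symm (ne_of_gt hd0)
    -- Plᗮ = span {w}
    have hspanw : Submodule.span ℝ {w} = Plᗮ := by
      apply Submodule.eq_of_le_of_finrank_le
      · rw [Submodule.span_le, Set.singleton_subset_iff]; exact hwO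
      · rw [hfr, finrank_span_singleton hw0]
    refine hnv ⟨w, hwO, fun x => ⟨fun hxL => ?_, fun ⟨j, hj⟩ => ?_⟩⟩
    swap
    · have : x = (x - j • w) + j • w := by abel
      rw [this]
      exact L.add_mem (AddSubgroup.mem_inf.1 hj).1 (AddSubgroup.zsmul_mem L hwL j)
    · have hxO : x - P x ∈ Plᗮ := Submodule.sub_starProjection_mem_orthogonal x
      rw [← hspanw] at hxO
      obtain ⟨s, hs⟩ := Submodule.mem_span_singleton.1 hxO
      refine ⟨⌊s⌋, ?_⟩
      set x' : EuclideanSpace ℝ (Fin n) := x - ⌊s⌋ • w with hx'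
      have hx'L : x' ∈ L := L.sub_mem hxL (AddSubgroup.zsmul_mem L hwL ⌊s⌋)
      have hPzw : P (⌊s⌋ • w) = 0 := by
        rw [hP]
        have : (⌊s⌋ • w : EuclideanSpace ℝ (Fin n)) ∈ Plᗮ := zsmul_mem hwO ⌊s⌋
        exact congrArg Subtype.val (Submodule.orthogonalProjectionOnto_apply_of_mem_orthogonal this)
      have hx'sub : x' - P x' = (Int.fract s) • w := by
        have h5 : P x' = P x - P (⌊s⌋ • w) := by
          rw [← hPapp, hx', map_sub, Submodule.coe_sub, hPapp, hPapp]
        have hzs : (⌊s⌋ • w : EuclideanSpace ℝ (Fin n)) = ((⌊s⌋ : ℝ)) • w :=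
          (Int.cast_smul_eq_zsmul ℝ ⌊s⌋ w).symm
        rw [h5, hPzw, sub_zero, hx', hzs, sub_right_comm, ← hs, Int.fract, sub_smul]
      by_cases hfs : Int.fract s = 0
      · have : x' ∈ Pl := by
          have h0 : x' - P x' = 0 := by rw [hx'sub, hfs, zero_smul]
          have : x' = P x' := by rwa [sub_eq_zero] at h0
          rw [this, hP]; exact (Pl.orthogonalProjection x').2
        exact AddSubgroup.mem_inf.2 ⟨hx'L, this⟩
      · exfalso
        have hx'P : x' ∉ Pl := by
          intro hmem
          apply hfs
          have : P x' = x' := Submodule.starProjection_eq_self_iff.2 hmem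
          rw [this, sub_self] at hx'sub
          have := hx'sub.symm
          exact (smul_eq_zero.1 this).resolve_right hw0
        have hdist : infDist x' (Pl : Set (EuclideanSpace ℝ (Fin n))) = Int.fract s * d := by
          rw [my_infDist_eq, hPapp, hx'sub, norm_smul, hwnorm, Real.norm_eq_abs,
            abs_of_nonneg (Int.fract_nonneg s)]
        have hlow := hdlb ⟨x', hx'L, hx'P, hdist⟩
        have hlt : Int.fract s * d < d := by
          have := Int.fract_lt_one s
          nlinarith
        linarith
  have hα01 : ∀ i, α i = 0 ∨ α i = 1 := fun i => Int.emod_two_eq_zero_or_one (m i)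
  refine ⟨α, ⟨hα01, hαne, u, huO, hunorm,
    by rw [hweq]; exact hwL, by rw [hweq]; exact hwP, by rw [hweq]; exact hwd⟩, ?_⟩
  -- uniqueness
  rintro β ⟨hβ01, hβne, u', hu'O, hu'norm, hwβL, hwβP, hwβd⟩
  have hu0 : u ≠ 0 := by
    intro h; rw [h, norm_zero] at hunorm; linarith
  have hspanu : Submodule.span ℝ {u} = Plᗮ := by
    apply Submodule.eq_of_le_of_finrank_le
    · rw [Submodule.span_le, Set.singleton_subset_iff]; exact huO
    · rw [hfr, finrank_span_singleton hu0]
  obtain ⟨c, hc⟩ := Submodule.mem_span_singleton.1 (show u' ∈ Submodule.span ℝ {u} by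
    rw [hspanu]; exact hu'O)
  have habs : |c| = 1 := by
    have h1 : ‖u'‖ = |c| * ‖u‖ := by rw [← hc, norm_smul, Real.norm_eq_abs]
    rw [hunorm, hu'norm] at h1
    have h2d : (2 * d) ≠ 0 := by positivity
    refine mul_right_cancel₀ h2d ?_
    rw [one_mul, ← h1]
  have hcases : c = 1 ∨ c = -1 := (abs_eq (by norm_num : (0:ℝ) ≤ 1)).1 habs
  have hsplitsub : ∑ i, ((α i : ℝ) - (β i : ℝ)) • v i
      = (∑ i, (α i : ℝ) • v i) - ∑ i, (β i : ℝ) • v i := by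
    rw [← Finset.sum_sub_distrib]
    exact Finset.sum_congr rfl fun i _ => sub_smul _ _ _
  have hsplitadd : ∑ i, ((α i : ℝ) + (β i : ℝ)) • v i
      = (∑ i, (α i : ℝ) • v i) + ∑ i, (β i : ℝ) • v i := by
    rw [← Finset.sum_add_distrib]
    exact Finset.sum_congr rfl fun i _ => add_smul _ _ _
  set D : EuclideanSpace ℝ (Fin n) := (2:ℝ)⁻¹ • ((∑ i, (β i : ℝ) • v i) + u') with hD
  rcases hcases with hc1 | hc1
  · -- u' = u
    have hu'u : u' = u := by rw [← hc, hc1, one_smul]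
    have hAB : w - D = (2:ℝ)⁻¹ • ∑ i, ((α i : ℝ) - (β i : ℝ)) • v i := by
      rw [hD, ← hweq, ← smul_sub]
      congr 1
      rw [hu'u, hsplitsub]; abel
    have hTmem : w - D ∈ L ⊓ Pl.toAddSubgroup := AddSubgroup.mem_inf.2
      ⟨L.sub_mem hwL hwβL, by
        rw [hAB]
        exact Pl.smul_mem _ (Submodule.sum_mem _ fun i _ => Pl.smul_mem _ (hviPL i).2)⟩
    obtain ⟨c', hc'⟩ := (hmemv _).1 hTmem
    have hc'R : ∑ i, ((c' i : ℝ)) • v i = (2:ℝ)⁻¹ • ∑ i, ((α i : ℝ) - (β i : ℝ)) • v i := by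
      rw [← hAB, ← hc']
      exact Finset.sum_congr rfl fun i _ => Int.cast_smul_eq_zsmul ℝ _ _
    have hg : ∑ i, (((c' i : ℝ)) - (2:ℝ)⁻¹ * ((α i : ℝ) - (β i : ℝ))) • v i = 0 := by
      have h1 : ∀ i ∈ Finset.univ, (((c' i : ℝ)) - (2:ℝ)⁻¹ * ((α i : ℝ) - (β i : ℝ))) • v i
          = (c' i : ℝ) • v i - (2:ℝ)⁻¹ • (((α i : ℝ) - (β i : ℝ)) • v i) := by
        intro i _; rw [sub_smul, smul_smul]
      rw [Finset.sum_congr rfl h1, Finset.sum_sub_distrib, ← Finset.smul_sum, hc'R, sub_self]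
    have hco := Fintype.linearIndependent_iff.1 hvli _ hg
    funext i
    have hi := hco i
    have hR : ((2 * c' i : ℤ) : ℝ) = ((α i - β i : ℤ) : ℝ) := by push_cast; linarith
    have hint : 2 * c' i = α i - β i := by exact_mod_cast hR
    have h1 := hα01 i; have h2 := hβ01 i
    omega
  · -- u' = -u
    have hu'u : u' = -u := by rw [← hc, hc1, neg_smul, one_smul]
    have hAB : w + D = (2:ℝ)⁻¹ • ∑ i, ((α i : ℝ) + (β i : ℝ)) • v i := by
      rw [hD, ← hweq, ← smul_add]
      congr 1
      rw [hu'u, hsplitadd]; abel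
    have hTmem : w + D ∈ L ⊓ Pl.toAddSubgroup := AddSubgroup.mem_inf.2
      ⟨L.add_mem hwL hwβL, by
        rw [hAB]
        exact Pl.smul_mem _ (Submodule.sum_mem _ fun i _ => Pl.smul_mem _ (hviPL i).2)⟩
    obtain ⟨c', hc'⟩ := (hmemv _).1 hTmem
    have hc'R : ∑ i, ((c' i : ℝ)) • v i = (2:ℝ)⁻¹ • ∑ i, ((α i : ℝ) + (β i : ℝ)) • v i := by
      rw [← hAB, ← hc']
      exact Finset.sum_congr rfl fun i _ => Int.cast_smul_eq_zsmul ℝ _ _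
    have hg : ∑ i, (((c' i : ℝ)) - (2:ℝ)⁻¹ * ((α i : ℝ) + (β i : ℝ))) • v i = 0 := by
      have h1 : ∀ i ∈ Finset.univ, (((c' i : ℝ)) - (2:ℝ)⁻¹ * ((α i : ℝ) + (β i : ℝ))) • v i
          = (c' i : ℝ) • v i - (2:ℝ)⁻¹ • (((α i : ℝ) + (β i : ℝ)) • v i) := by
        intro i _; rw [sub_smul, smul_smul]
      rw [Finset.sum_congr rfl h1, Finset.sum_sub_distrib, ← Finset.smul_sum, hc'R, sub_self]
    have hco := Fintype.linearIndependent_iff.1 hvli _ hg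
    funext i
    have hi := hco i
    have hR : ((2 * c' i : ℤ) : ℝ) = ((α i + β i : ℤ) : ℝ) := by push_cast; linarith
    have hint : 2 * c' i = α i + β i := by exact_mod_cast hR
    have h1 := hα01 i; have h2 := hβ01 i
    omega
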